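/- Let T_1,…,T_m : [0,1] → [0,1] be finitely many maps and x0 ∈ [0,1]. Assume that every finite composition T_{i_j} ∘ ⋯ ∘ T_{i_1} (i_1,…,i_j ∈ {1,…,m}, j ≥ 1) is continuous at x0 and satisfies (T_{i_j} ∘ ⋯ ∘ T_{i_1})(x0) ≠ x0 (i.e., x0 is non-periodic for the random system and lies outside the set 𝒟 of discontinuities). Fix c > 0 and let V_n := { x ∈ [0,1] : |x − x0| < c/n }. Then for every integer R ≥ 1 there exists n_R ≥ 1 such that for all n ≥ n_R, every word (i_1,…,i_j) with 1 ≤ j < R, and every x ∈ V_n: (T_{i_j} ∘ ⋯ ∘ T_{i_1})(x) ∉ V_n. In particular, the shortest return time r(V_n) := inf_{ω} inf_{x ∈ V_n} inf{ k ≥ 1 : T_ω^k(x) ∈ V_n } tends to +∞ as n → ∞. -/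
import Mathlib


open MeasureTheory Filter Set Topology

noncomputable section

/-- The two-sided shift space on `m` symbols. -/
abbrev Om (m : ℕ) := ℤ → Fin m

/-- The random composition `T_ω^n = T_{ω_{n−1}} ∘ ⋯ ∘ T_{ω_0}`. -/
def randComp {m : ℕ} (T : Fin m → ℝ → ℝ) (ω : Om m) : ℕ → ℝ → ℝ
  | 0 => fun x => x
  | n + 1 => fun x => T (ω (n : ℤ)) (randComp T ω n x)

/-- The composition `T_{i_j} ∘ ⋯ ∘ T_{i_1}` along a finite word `w = [i_1, …, i_j]`. -/
def wordComp {m : ℕ} (T : Fin m → ℝ → ℝ) (w : List (Fin m)) (x : ℝ) : ℝ :=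
  w.foldl (fun y i => T i y) x

lemma wordComp_concat {m : ℕ} (T : Fin m → ℝ → ℝ) (w : List (Fin m)) (i : Fin m) (x : ℝ) :
    wordComp T (w ++ [i]) x = T i (wordComp T w x) := by
  simp [wordComp, List.foldl_append]

lemma randComp_eq_wordComp {m : ℕ} (T : Fin m → ℝ → ℝ) (ω : Om m) (k : ℕ) (x : ℝ) :
    randComp T ω k x = wordComp T (List.ofFn fun i : Fin k => ω (i : ℤ)) x := by
  induction k with
  | zero => simp [randComp, wordComp]
  | succ n ih =>
      rw [List.ofFn_succ']
      show T (ω (n : ℤ)) (randComp T ω n x) = _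
      rw [List.concat_eq_append, wordComp_concat, ih]
      simp

lemma single_word {m : ℕ} (T : Fin m → ℝ → ℝ) (x0 c : ℝ) (hc : 0 < c)
    (V : ℕ → Set ℝ) (hV : ∀ n, V n = {x ∈ Set.Icc (0 : ℝ) 1 | |x - x0| < c / n})
    (w : List (Fin m)) (hcont : ContinuousAt (wordComp T w) x0)
    (hnp : wordComp T w x0 ≠ x0) :
    ∃ N : ℕ, 1 ≤ N ∧ ∀ n, N ≤ n → ∀ x ∈ V n, wordComp T w x ∉ V n := by
  set f := wordComp T w with hf
  set d := |f x0 - x0| with hd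
  have hd0 : 0 < d := abs_pos.mpr (sub_ne_zero.mpr hnp)
  rw [Metric.continuousAt_iff] at hcont
  obtain ⟨δ, hδ0, hδ⟩ := hcont (d / 3) (by linarith)
  set ε := min δ (d / 3) with hε
  have hε0 : 0 < ε := lt_min hδ0 (by linarith)
  refine ⟨⌈c / ε⌉₊ + 1, by omega, fun n hn x hx hfx => ?_⟩
  have hn0 : (0 : ℝ) < n := by
    have : 1 ≤ n := by omega
    exact_mod_cast this
  have hcn : c / n < ε := by
    have h1 : c / ε < n := by
      have : c / ε ≤ ⌈c / ε⌉₊ := Nat.le_ceil _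
      have h2 : (⌈c / ε⌉₊ + 1 : ℝ) ≤ n := by exact_mod_cast hn
      linarith
    rw [div_lt_iff₀ hn0]
    rw [div_lt_iff₀ hε0] at h1
    linarith [mul_comm ε (n : ℝ)]
  rw [hV n] at hx hfx
  have h3 : |x - x0| < δ := lt_of_lt_of_le (lt_of_lt_of_le hx.2 hcn.le) (min_le_left _ _)
  have h4 : dist (f x) (f x0) < d / 3 := hδ (by rwa [Real.dist_eq])
  rw [Real.dist_eq] at h4
  have h5 : |f x - x0| < c / n := hfx.2
  have h6 : c / n < d / 3 := lt_of_lt_of_le hcn (min_le_right _ _)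
  have := abs_sub_abs_le_abs_sub (f x0 - x0) (f x - x0)
  have h7 : |f x0 - x0 - (f x - x0)| = |f x - f x0| := by
    rw [← abs_neg]; ring_nf
  linarith [abs_sub_abs_le_abs_sub (f x0 - x0) (f x - x0), h7 ▸ this]

theorem stmt7 (m : ℕ) (hm : 1 ≤ m) (T : Fin m → ℝ → ℝ)
    (hmaps : ∀ i, Set.MapsTo (T i) (Set.Icc 0 1) (Set.Icc 0 1))
    (x0 : ℝ) (hx0 : x0 ∈ Set.Icc (0 : ℝ) 1)
    -- every finite composition is continuous at `x0` and does not fix `x0`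
    (hcont : ∀ w : List (Fin m), w ≠ [] → ContinuousAt (wordComp T w) x0)
    (hnp : ∀ w : List (Fin m), w ≠ [] → wordComp T w x0 ≠ x0)
    (c : ℝ) (hc : 0 < c)
    (V : ℕ → Set ℝ) (hV : ∀ n, V n = {x ∈ Set.Icc (0 : ℝ) 1 | |x - x0| < c / n}) :
    (∀ R : ℕ, 1 ≤ R → ∃ nR : ℕ, 1 ≤ nR ∧ ∀ n, nR ≤ n → ∀ w : List (Fin m),
      1 ≤ w.length → w.length < R → ∀ x ∈ V n, wordComp T w x ∉ V n) ∧
    -- in particular, the shortest return time `r(V_n)` tends to `+∞`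
    (∀ R : ℕ, ∃ n₀ : ℕ, ∀ n, n₀ ≤ n → ∀ (ω : Om m), ∀ x ∈ V n,
      ∀ k : ℕ, 1 ≤ k → k ≤ R → randComp T ω k x ∉ V n) := by
  have main : ∀ R : ℕ, 1 ≤ R → ∃ nR : ℕ, 1 ≤ nR ∧ ∀ n, nR ≤ n → ∀ w : List (Fin m),
      1 ≤ w.length → w.length < R → ∀ x ∈ V n, wordComp T w x ∉ V n := by
    intro R _
    have hfin : {w : List (Fin m) | w.length < R}.Finite := List.finite_length_lt _ _
    -- choose a bound for each word
    have hex : ∀ w : List (Fin m), ∃ N : ℕ, 1 ≤ N ∧ (w ≠ [] →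
        ∀ n, N ≤ n → ∀ x ∈ V n, wordComp T w x ∉ V n) := by
      intro w
      by_cases hw : w = []
      · exact ⟨1, le_refl _, fun h => absurd hw h⟩
      · obtain ⟨N, hN1, hN⟩ := single_word T x0 c hc V hV w (hcont w hw) (hnp w hw)
        exact ⟨N, hN1, fun _ => hN⟩
    choose g hg1 hg2 using hex
    refine ⟨max 1 (hfin.toFinset.sup g), le_max_left _ _, fun n hn w hw1 hw2 x hx => ?_⟩
    have hwne : w ≠ [] := by
      intro h; subst h; simp at hw1
    have hmem : w ∈ hfin.toFinset := by simpa using hw2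
    have : g w ≤ n := le_trans (le_trans (Finset.le_sup hmem) (le_max_right _ _)) hn
    exact hg2 w hwne n this x hx
  refine ⟨main, fun R => ?_⟩
  obtain ⟨nR, hnR1, hnR⟩ := main (R + 1) (by omega)
  refine ⟨nR, fun n hn ω x hx k hk1 hk2 => ?_⟩
  rw [randComp_eq_wordComp]
  exact hnR n hn _ (by simp [hk1]) (by simp; omega) x hx
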